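/- Let n ≥ 8 be an integer and set c = n/2 (as a real number). Let p and p' be real numbers with 0 < p ≤ 1 and 0 < p' ≤ p/4. If ((n−1)/c) · (1 − p/c)^{n−2} ≥ 1.45, then ((n−1)/c) · (1 − p'/c)^{n−2} > 1.59. -/
import Mathlib


theorem stmt_9 (n : ℕ) (hn : 8 ≤ n) (c : ℝ) (hc : c = (n : ℝ) / 2)
    (p p' : ℝ) (hp0 : 0 < p) (hp1 : p ≤ 1) (hp'0 : 0 < p') (hp' : p' ≤ p / 4)
    (h : 1.45 ≤ ((n : ℝ) - 1) / c * (1 - p / c) ^ (n - 2)) :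
    1.59 < ((n : ℝ) - 1) / c * (1 - p' / c) ^ (n - 2) := by
  have hn8 : (8 : ℝ) ≤ (n : ℝ) := by exact_mod_cast hn
  have hc4 : (4 : ℝ) ≤ c := by rw [hc]; linarith
  have hcpos : 0 < c := by linarith
  have hx0 : 0 ≤ 1 - p / c := by
    have : p / c ≤ 1 / 4 := by
      rw [div_le_div_iff₀ hcpos (by norm_num)]; nlinarith
    linarith
  have hy0 : 0 ≤ 1 - p' / c := by
    have : p' / c ≤ 1 / 4 := by
      rw [div_le_div_iff₀ hcpos (by norm_num)]; nlinarith
    linarith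
  have hA : (1.75 : ℝ) ≤ ((n : ℝ) - 1) / c := by
    rw [hc, le_div_iff₀ (by linarith)]
    nlinarith
  have hy4x : (1 - p / c) ≤ (1 - p' / c) ^ 4 := by
    have ht : 4 * (p' / c) ≤ p / c := by
      rw [show (4:ℝ) * (p' / c) = (4 * p') / c by ring]
      gcongr
      linarith
    nlinarith [sq_nonneg (p' / c), sq_nonneg (p' / c - 2), sq_nonneg ((p'/c) * (p'/c - 2))]
  set A : ℝ := ((n : ℝ) - 1) / c with hAdef
  set X : ℝ := (1 - p / c) ^ (n - 2) with hX
  set Y : ℝ := (1 - p' / c) ^ (n - 2) with hY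
  have hX0 : 0 ≤ X := pow_nonneg hx0 _
  have hY0 : 0 ≤ Y := pow_nonneg hy0 _
  have hXY : X ≤ Y ^ 4 := by
    calc X ≤ ((1 - p' / c) ^ 4) ^ (n - 2) := pow_le_pow_left₀ hx0 hy4x _
    _ = Y ^ 4 := by rw [← pow_mul, mul_comm, pow_mul]
  have key : (1.59 : ℝ) ^ 4 < (A * Y) ^ 4 := by
    have h1 : A ^ 4 * X ≤ (A * Y) ^ 4 := by
      have : A ^ 4 * X ≤ A ^ 4 * Y ^ 4 := by
        apply mul_le_mul_of_nonneg_left hXY (by positivity)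
      calc A ^ 4 * X ≤ A ^ 4 * Y ^ 4 := this
      _ = (A * Y) ^ 4 := by ring
    have h2 : (1.75 : ℝ) ^ 3 * 1.45 ≤ A ^ 4 * X := by
      have hAX : 1.45 ≤ A * X := h
      have hA3 : (1.75:ℝ) ^ 3 ≤ A ^ 3 := pow_le_pow_left₀ (by norm_num) hA 3
      have h2a : A ^ 3 * 1.45 ≤ A ^ 3 * (A * X) :=
        mul_le_mul_of_nonneg_left hAX (by positivity)
      nlinarith
    nlinarith
  have := lt_of_pow_lt_pow_left₀ 4 (by positivity) key
  linarith
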